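/- With w(t) = A e^{iΩ₁t} + B e^{iΩ₂t} as above, the coefficient of e^{iΩ₁t} in |w|²w has modulus |A|·(|A|² + 2|B|²) when A|A|² and 2A|B|² are aligned; in particular, for the steady-state equation i(Ω₁−ω₀)X + (|X|² + 2|Y|²)X = F₁, the presence of a second tone (Y ≠ 0) strictly decreases the response amplitude |X| compared with the single-tone equation i(Ω₁−ω₀)X + |X|²X = F₁ (two-tone suppression), for fixed F₁ ≠ 0. -/

import Mathlib

/-- The coefficient of `e^{iΩ₁t}` in `|w|²w` has modulus `|A|(|A|² + 2|B|²)`; moreover, for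
the two-tone steady state, the presence of a second tone (`s > 0`) strictly decreases the
response amplitude at `Ω₁` compared with the single-tone response (two-tone suppression). -/
theorem stmt11 (ω₀ Ω₁ : ℝ) (F₁ : ℂ) (hF : F₁ ≠ 0) :
    (∀ A B : ℂ,
      ‖A * (‖A‖ : ℂ) ^ 2 + 2 * A * (‖B‖ : ℂ) ^ 2‖
        = ‖A‖ * ((‖A‖) ^ 2 + 2 * (‖B‖) ^ 2)) ∧
    (∀ s r rs : ℝ, 0 < s → 0 ≤ r → 0 ≤ rs →
      r ^ 2 * ((Ω₁ - ω₀) ^ 2 + (r ^ 2 + 2 * s ^ 2) ^ 2) = (‖F₁‖) ^ 2 →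
      rs ^ 2 * ((Ω₁ - ω₀) ^ 2 + rs ^ 4) = (‖F₁‖) ^ 2 →
      r < rs) := by
  constructor
  · intro A B
    have h : A * (‖A‖ : ℂ) ^ 2 + 2 * A * (‖B‖ : ℂ) ^ 2
        = A * (((‖A‖) ^ 2 + 2 * (‖B‖) ^ 2 : ℝ) : ℂ) := by
      push_cast; ring
    rw [h, norm_mul, Complex.norm_real, Real.norm_eq_abs, abs_of_nonneg (by positivity)]
  · intro s r rs hs hr hrs h1 h2
    have hF2 : (0:ℝ) < ‖F₁‖ ^ 2 := by
      have := norm_pos_iff.mpr hF; positivity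
    have hr0 : 0 < r := by
      rcases hr.lt_or_eq with h | h
      · exact h
      · exfalso; rw [← h] at h1; nlinarith
    by_contra hlt
    push_neg at hlt
    have hsq : rs ^ 2 ≤ r ^ 2 := by nlinarith
    have h4 : rs ^ 4 ≤ r ^ 4 := by nlinarith
    have key1 : rs ^ 2 * ((Ω₁ - ω₀) ^ 2 + rs ^ 4) ≤ r ^ 2 * ((Ω₁ - ω₀) ^ 2 + r ^ 4) := by
      apply mul_le_mul hsq (by nlinarith) (by positivity) (by positivity)
    have key2 : r ^ 2 * ((Ω₁ - ω₀) ^ 2 + r ^ 4) < r ^ 2 * ((Ω₁ - ω₀) ^ 2 + (r ^ 2 + 2 * s ^ 2) ^ 2) := by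
      apply mul_lt_mul_of_pos_left _ (by positivity)
      nlinarith [sq_nonneg r, mul_pos hs hs, sq_nonneg (r*s), mul_pos (mul_pos hs hs) (mul_pos hs hs)]
    linarith
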